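/- Let 0<γ<1, K>0, y>0, and let u, p ∈ ℝ satisfy u ≥ ((1−γ)/γ)y^{γ/(γ−1)} + Ky and p ≤ K − y^{1/(γ−1)}. Then u ≥ y·p + (1/γ)(K − p)^γ. -/

import Mathlib

theorem stmt_14 (γ K y u p : ℝ) (hγ : 0 < γ) (hγ1 : γ < 1) (hK : 0 < K)
    (hy : 0 < y)
    (hu : u ≥ ((1 - γ) / γ) * y ^ (γ / (γ - 1)) + K * y)
    (hp : p ≤ K - y ^ (1 / (γ - 1))) :
    u ≥ y * p + (1 / γ) * (K - p) ^ γ := by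
  set b : ℝ := y ^ (1 / (γ - 1)) with hb_def
  have hγ1' : γ - 1 ≠ 0 := by linarith
  have hb : 0 < b := Real.rpow_pos_of_pos hy _
  have hab : b ≤ K - p := by linarith
  have ha : 0 < K - p := lt_of_lt_of_le hb hab
  -- b ^ (γ - 1) = y
  have hbγ1 : b ^ (γ - 1) = y := by
    rw [hb_def, ← Real.rpow_mul hy.le, one_div, inv_mul_cancel₀ hγ1', Real.rpow_one]
  -- b ^ γ = y ^ (γ / (γ - 1))
  have hbγ : b ^ γ = y ^ (γ / (γ - 1)) := by
    rw [hb_def, ← Real.rpow_mul hy.le]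
    ring_nf
  -- y * b = y ^ (γ / (γ - 1))
  have hyb : y * b = y ^ (γ / (γ - 1)) := by
    rw [hb_def]
    nth_rewrite 1 [← Real.rpow_one y]
    rw [← Real.rpow_add hy]
    congr 1
    field_simp
    ring
  -- Bernoulli: ((K - p) / b) ^ γ ≤ 1 + γ * ((K - p) / b - 1)
  have hs : (0 : ℝ) ≤ (K - p) / b - 1 := by
    rw [sub_nonneg, le_div_iff₀ hb, one_mul]; exact hab
  have hbern := rpow_one_add_le_one_add_mul_self (s := (K - p) / b - 1)
    (by linarith) hγ.le hγ1.le
  rw [add_sub_cancel] at hbern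
  -- (K - p) ^ γ ≤ b ^ γ + γ * y * (K - p - b)
  have hkey : (K - p) ^ γ ≤ b ^ γ + γ * y * (K - p - b) := by
    have h1 : (K - p) ^ γ = b ^ γ * ((K - p) / b) ^ γ := by
      rw [← Real.mul_rpow hb.le (by positivity)]
      rw [mul_div_cancel₀ _ hb.ne']
    rw [h1]
    calc b ^ γ * ((K - p) / b) ^ γ ≤ b ^ γ * (1 + γ * ((K - p) / b - 1)) := by
          apply mul_le_mul_of_nonneg_left hbern (Real.rpow_pos_of_pos hb γ).le
      _ = b ^ γ + γ * (b ^ γ / b) * (K - p - b) := by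
          field_simp
      _ = b ^ γ + γ * y * (K - p - b) := by
          rw [← hbγ1, Real.rpow_sub hb, Real.rpow_one]
    done
  have hγne : γ ≠ 0 := hγ.ne'
  have : y * p + (1 / γ) * (K - p) ^ γ ≤
      ((1 - γ) / γ) * y ^ (γ / (γ - 1)) + K * y := by
    have h2 : (1 / γ) * (K - p) ^ γ ≤ (1 / γ) * b ^ γ + y * (K - p - b) := by
      have := mul_le_mul_of_nonneg_left hkey (le_of_lt (by positivity : (0:ℝ) < 1 / γ))
      calc (1 / γ) * (K - p) ^ γ ≤ (1 / γ) * (b ^ γ + γ * y * (K - p - b)) := this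
        _ = (1 / γ) * b ^ γ + y * (K - p - b) := by field_simp
    have h3 : y * p + (1 / γ) * (K - p) ^ γ ≤ (1 / γ) * b ^ γ + y * K - y * b := by
      nlinarith
    rw [hbγ] at h3
    rw [← hyb] at h3 ⊢
    have h4 : (1 - γ) / γ * (y * b) = 1 / γ * (y * b) - y * b := by
      field_simp
    linarith
  linarith
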